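/- Let A be a C*-algebra acting on a Hilbert module E via a homomorphism into the adjointable operators, let ψ be a faithful state of the coefficient C*-algebra B, and let E_ψ be the Hilbert space completion of E in the inner product ⟨f₁,f₂⟩_ψ = ψ(⟨f₁,f₂⟩_B). Then every bounded adjointable operator T on E extends to a bounded operator on E_ψ, and the localization map B(E) → B(E_ψ) so defined is an injective, hence isometric, homomorphism of C*-algebras. -/

import Mathlib

open scoped ComplexOrder

/-- The Hilbert C⋆-module class as it stood in Mathlib (December 2024): a right module
(action of `Aᵐᵒᵖ`) with `A`-valued inner product, linear in the second argument. -/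
class CStarModuleRight (A E : Type*) [NonUnitalSemiring A] [StarRing A] [Module ℂ A]
    [AddCommGroup E] [Module ℂ E] [PartialOrder A] [SMul Aᵐᵒᵖ E] [Norm A] [Norm E]
    extends Inner A E where
  inner_add_right {x} {y} {z} : inner x (y + z) = inner x y + inner x z
  inner_self_nonneg {x} : 0 ≤ inner x x
  inner_self {x} : inner x x = 0 ↔ x = 0
  inner_op_smul_right {a : A} {x y : E} : inner x (MulOpposite.op a • y) = inner x y * a
  inner_smul_right_complex {z : ℂ} {x} {y} : inner x (z • y) = z • inner x y
  star_inner x y : star (inner x y) = inner y x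
  norm_eq_sqrt_norm_inner_self x : ‖x‖ = √‖inner x x‖


namespace CStarModuleRight

variable {A E : Type*} [NonUnitalCStarAlgebra A] [PartialOrder A] [StarOrderedRing A]
  [NormedAddCommGroup E] [NormedSpace ℂ E] [SMul Aᵐᵒᵖ E] [CStarModuleRight A E]

lemma inner_op_smul_left {a : A} {x y : E} :
    inner A (MulOpposite.op a • x) y = star a * inner A x y := by
  rw [← star_inner, inner_op_smul_right, star_mul, star_inner]

lemma inner_zero_right {x : E} : inner A x (0 : E) = 0 := by
  have h : inner A x ((0 : E) + 0) = inner A x (0 : E) + inner A x (0 : E) := inner_add_right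
  rw [add_zero] at h
  exact (left_eq_add.mp h)

lemma inner_zero_left {x : E} : inner A (0 : E) x = 0 := by
  rw [← star_inner, inner_zero_right, star_zero]

lemma inner_sub_right {x y z : E} : inner A x (y - z) = inner A x y - inner A x z := by
  have h : inner A x (y - z + z) = inner A x (y - z) + inner A x z := inner_add_right
  rw [sub_add_cancel] at h
  rw [h]; abel

lemma inner_sub_left {x y z : E} : inner A (x - y) z = inner A x z - inner A y z := by
  rw [← star_inner, inner_sub_right, star_sub, star_inner, star_inner]

lemma inner_smul_right_real {r : ℝ} {x y : E} : inner A x (r • y) = r • inner A x y := by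
  rw [← Complex.coe_smul, inner_smul_right_complex, Complex.coe_smul]

lemma inner_smul_left_real {r : ℝ} {x y : E} : inner A (r • x) y = r • inner A x y := by
  rw [← star_inner, inner_smul_right_real, ← Complex.coe_smul, star_smul, Complex.star_def,
    Complex.conj_ofReal, Complex.coe_smul, star_inner]

lemma norm_sq_eq {x : E} : ‖x‖ ^ 2 = ‖inner A x x‖ := by
  rw [norm_eq_sqrt_norm_inner_self (A := A), Real.sq_sqrt (norm_nonneg _)]

lemma inner_mul_inner_swap_le {x y : E} (hx : x ≠ 0) :
    inner A y x * inner A x y ≤ ‖x‖ ^ 2 • inner A y y := by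
  have hr : 0 < ‖x‖ ^ 2 := by have := norm_pos_iff.mpr hx; positivity
  have h₁ : ∀ (a : A),
      (0 : A) ≤ ‖x‖ ^ 2 • (star a * a) - ‖x‖ ^ 2 • (star a * inner A x y)
                - ‖x‖ ^ 2 • (inner A y x * a) + ‖x‖ ^ 2 • (‖x‖ ^ 2 • inner A y y) := fun a => by
    calc (0 : A) ≤ inner A (MulOpposite.op a • x - ‖x‖ ^ 2 • y)
          (MulOpposite.op a • x - ‖x‖ ^ 2 • y) := inner_self_nonneg
      _ = star a * inner A x x * a - ‖x‖ ^ 2 • (star a * inner A x y)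
            - ‖x‖ ^ 2 • (inner A y x * a) + ‖x‖ ^ 2 • (‖x‖ ^ 2 • inner A y y) := by
          simp only [inner_sub_right, inner_op_smul_right, inner_sub_left,
            inner_op_smul_left, inner_smul_left_real, mul_sub, mul_smul_comm,
            inner_smul_right_real, smul_sub, sub_mul, mul_assoc, smul_mul_assoc]
          abel
      _ ≤ ‖x‖ ^ 2 • (star a * a) - ‖x‖ ^ 2 • (star a * inner A x y)
            - ‖x‖ ^ 2 • (inner A y x * a) + ‖x‖ ^ 2 • (‖x‖ ^ 2 • inner A y y) := by
          gcongr
          calc _ ≤ ‖inner A x x‖ • (star a * a) :=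
              CStarAlgebra.star_left_conjugate_le_norm_smul (hb := star_inner x x)
            _ = ‖x‖ ^ 2 • (star a * a) := by rw [← norm_sq_eq]
  specialize h₁ (inner A x y)
  simp only [star_inner, sub_self, zero_sub, le_neg_add_iff_add_le, add_zero] at h₁
  rwa [smul_le_smul_iff_of_pos_left hr] at h₁

variable (E) in
lemma norm_inner_le {x y : E} : ‖inner A x y‖ ≤ ‖x‖ * ‖y‖ := by
  rcases eq_or_ne x 0 with hx | hx
  · rw [hx, inner_zero_left, norm_zero]; positivity
  have := calc ‖inner A x y‖ ^ 2 = ‖inner A y x * inner A x y‖ := by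
                rw [← star_inner x, CStarRing.norm_star_mul_self, pow_two]
    _ ≤ ‖‖x‖ ^ 2 • inner A y y‖ := by
                refine CStarAlgebra.norm_le_norm_of_nonneg_of_le ?_ (inner_mul_inner_swap_le hx)
                rw [← star_inner x]
                exact star_mul_self_nonneg _
    _ = ‖x‖ ^ 2 * ‖inner A y y‖ := by rw [norm_smul, Real.norm_of_nonneg (by positivity)]
    _ = ‖x‖ ^ 2 * ‖y‖ ^ 2 := by rw [← norm_sq_eq]
    _ = (‖x‖ * ‖y‖) ^ 2 := by rw [mul_pow]
  exact (pow_le_pow_iff_left₀ (norm_nonneg _) (by positivity) (by simp)).mp this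

end CStarModuleRight

section aux

variable {B : Type*} [NonUnitalCStarAlgebra B] [PartialOrder B] [StarOrderedRing B]

omit [PartialOrder B] [StarOrderedRing B] in
lemma aux_cube_eq_zero (a : B) (ha : IsSelfAdjoint a) (h : a * a * a = 0) : a = 0 := by
  have h4 : a * a * (a * a) = 0 := by
    calc a * a * (a * a) = a * (a * a * a) := by noncomm_ring
    _ = 0 := by rw [h, mul_zero]
  have hsq : a * a = 0 := by
    have h1 := CStarRing.norm_star_mul_self (x := a * a)
    have h2 : star (a * a) = a * a := by rw [star_mul, ha.star_eq]
    rw [h2, h4, norm_zero] at h1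
    have : ‖a * a‖ = 0 := by nlinarith [norm_nonneg (a*a)]
    exact norm_eq_zero.mp this
  have h1 := CStarRing.norm_star_mul_self (x := a)
  rw [ha.star_eq, hsq, norm_zero] at h1
  have : ‖a‖ = 0 := by nlinarith [norm_nonneg a]
  exact norm_eq_zero.mp this

lemma aux_nonneg_of_psi (ψ : B →ₗ[ℂ] ℂ)
    (hψpos : ∀ b : B, 0 ≤ b → 0 ≤ ψ b)
    (hψfaithful : ∀ b : B, 0 ≤ b → ψ b = 0 → b = 0)
    (z : B) (hz : IsSelfAdjoint z) (h : ∀ b : B, 0 ≤ ψ (star b * z * b)) : 0 ≤ z := by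
  have hneg : z⁻ = 0 := by
    have hn : (0:B) ≤ z⁻ := CFC.negPart_nonneg z
    have hcube_nonneg : (0:B) ≤ z⁻ * z⁻ * z⁻ := by
      have hs : CFC.sqrt z⁻ * CFC.sqrt z⁻ = z⁻ := CFC.sqrt_mul_sqrt_self z⁻
      have hsa : IsSelfAdjoint (CFC.sqrt z⁻) := IsSelfAdjoint.of_nonneg (CFC.sqrt_nonneg _)
      set s := CFC.sqrt z⁻ with hsdef
      have : z⁻ * z⁻ * z⁻ = star (s * (s * s)) * (s * (s * s)) := by
        rw [← hs]; simp only [star_mul, hsa.star_eq]; noncomm_ring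
      rw [this]
      exact star_mul_self_nonneg _
    have h0' : z⁻ * z⁺ = 0 := CFC.negPart_mul_posPart z
    have hkey : star z⁻ * z * z⁻ = -(z⁻ * z⁻ * z⁻) := by
      have hsa : IsSelfAdjoint (z⁻) := IsSelfAdjoint.of_nonneg hn
      have hzpq : z = z⁺ - z⁻ := (CFC.posPart_sub_negPart z hz).symm
      rw [hsa.star_eq]
      set p := z⁺; set q := z⁻
      rw [hzpq]
      calc q * (p - q) * q = (q * p) * q - q * q * q := by noncomm_ring
      _ = -(q * q * q) := by rw [h0', zero_mul, zero_sub]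
    have h0 := h z⁻
    rw [hkey, map_neg] at h0
    have h1 : ψ (z⁻ * z⁻ * z⁻) = 0 :=
      le_antisymm (by rwa [← neg_nonneg]) (hψpos _ hcube_nonneg)
    exact aux_cube_eq_zero _ (IsSelfAdjoint.of_nonneg hn) (hψfaithful _ hcube_nonneg h1)
  rw [← CFC.posPart_sub_negPart z hz, hneg, sub_zero]
  exact CFC.posPart_nonneg z

end aux

set_option maxHeartbeats 2000000 in
/-- Let `E` be a Hilbert module over a C*-algebra `B`, `ψ` a faithful state of `B`, and
`E_ψ` the Hilbert space completion of `E` in the inner product `⟨f,g⟩_ψ = ψ(⟨f,g⟩_B)`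
(modelled by a dense linear map `j : E → E_ψ` compatible with the inner products).
Then every bounded adjointable operator `T` on `E` extends to a bounded operator `T'` on
`E_ψ`, and the localization map `T ↦ T'` is an injective, hence isometric, homomorphism
of C*-algebras: `‖T'‖ = ‖T‖`. -/
theorem stmt_16 {B : Type*} [NonUnitalCStarAlgebra B] [PartialOrder B] [StarOrderedRing B]
    {E : Type*} [NormedAddCommGroup E] [NormedSpace ℂ E] [SMul Bᵐᵒᵖ E] [CStarModuleRight B E]
    [CompleteSpace E]
    -- `ψ` is a faithful state of `B`:
    (ψ : B →ₗ[ℂ] ℂ)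
    (hψpos : ∀ b : B, 0 ≤ b → 0 ≤ ψ b)
    (hψfaithful : ∀ b : B, 0 ≤ b → ψ b = 0 → b = 0)
    (hψbound : ∀ b : B, ‖ψ b‖ ≤ ‖b‖)
    -- `E_ψ`, realized as the closure of the image of a dense map `j : E → E_ψ`:
    {Eψ : Type*} [NormedAddCommGroup Eψ] [InnerProductSpace ℂ Eψ] [CompleteSpace Eψ]
    (j : E →ₗ[ℂ] Eψ) (hdense : DenseRange j)
    (hj : ∀ f g : E, inner ℂ (j f) (j g) = ψ (inner B f g)) :
    ∀ T Tadj : E →L[ℂ] E,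
      (∀ f g : E, inner B (T f) g = inner B f (Tadj g)) →
      ∃ T' : Eψ →L[ℂ] Eψ, (∀ f : E, T' (j f) = j (T f)) ∧ ‖T'‖ = ‖T‖ := by
  intro T Tadj hT
  -- ψ⟨g,g⟩ is ‖j g‖²
  have hip : ∀ g : E, ψ (inner B g g : B) = ((‖j g‖ ^ 2 : ℝ) : ℂ) := by
    intro g
    rw [← hj]
    rw [inner_self_eq_norm_sq_to_K]
    norm_cast
  -- ‖j g‖ ≤ ‖g‖
  have hjle : ∀ g : E, ‖j g‖ ≤ ‖g‖ := by
    intro g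
    have h1 : (‖j g‖^2 : ℝ) = (ψ (inner B g g : B)).re := by rw [hip]; exact (Complex.ofReal_re _).symm
    have h2 : (ψ (inner B g g : B)).re ≤ ‖(inner B g g : B)‖ :=
      (Complex.re_le_norm _).trans (hψbound _)
    have h3 : ‖(inner B g g : B)‖ ≤ ‖g‖ * ‖g‖ := by
      simpa using CStarModuleRight.norm_inner_le (A := B) E (x := g) (y := g)
    nlinarith [norm_nonneg (j g), norm_nonneg g]
  -- adjoint of Tadj is T
  have hadj' : ∀ f g : E, (inner B (Tadj f) g : B) = inner B f (T g) := by
    intro f g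
    rw [← CStarModuleRight.star_inner (A := B), ← hT, CStarModuleRight.star_inner]
  -- norm of adjoint
  have hnormle : ∀ (S Sadj : E →L[ℂ] E), (∀ f g : E, (inner B (S f) g : B) = inner B f (Sadj g)) →
      ‖S‖ ≤ ‖Sadj‖ := by
    intro S Sadj hS
    refine ContinuousLinearMap.opNorm_le_bound _ (norm_nonneg _) fun f => ?_
    have h1 : ‖S f‖^2 = ‖(inner B (S f) (S f) : B)‖ := CStarModuleRight.norm_sq_eq
    rw [hS] at h1
    have h2 : ‖(inner B f (Sadj (S f)) : B)‖ ≤ ‖f‖ * (‖Sadj‖ * ‖S f‖) := by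
      refine (CStarModuleRight.norm_inner_le (A := B) E).trans ?_
      gcongr
      exact Sadj.le_opNorm _
    rcases le_or_gt ‖S f‖ 0 with h | h
    · exact h.trans (by positivity)
    · have := h1.le.trans h2
      calc ‖S f‖ = ‖S f‖^2 / ‖S f‖ := by field_simp [pow_two]
      _ ≤ (‖f‖ * (‖Sadj‖ * ‖S f‖)) / ‖S f‖ := by gcongr
      _ = ‖Sadj‖ * ‖f‖ := by field_simp
  have hTadj_norm : ‖Tadj‖ = ‖T‖ := le_antisymm (hnormle Tadj T hadj') (hnormle T Tadj hT)
  set R : E →L[ℂ] E := Tadj.comp T with hRdef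
  have hRsym : ∀ f g : E, (inner B (R f) g : B) = inner B f (R g) := by
    intro f g
    calc (inner B (Tadj (T f)) g : B) = inner B (T f) (T g) := hadj' _ _
    _ = inner B f (Tadj (T g)) := hT _ _
  have hRnorm : ‖R‖ ≤ ‖T‖^2 := by
    calc ‖R‖ ≤ ‖Tadj‖ * ‖T‖ := ContinuousLinearMap.opNorm_comp_le _ _
    _ = ‖T‖^2 := by rw [hTadj_norm]; ring
  have hRpow : ∀ (n : ℕ) (f g : E), (inner B ((R^n) f) g : B) = inner B f ((R^n) g) := by
    intro n
    induction n with
    | zero => intro f g; simp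
    | succ n ih =>
      intro f g
      calc (inner B ((R^(n+1)) f) g : B) = inner B ((R^n) (R f)) g := by
            rw [pow_succ, ContinuousLinearMap.mul_apply]
      _ = inner B (R f) ((R^n) g) := ih _ _
      _ = inner B f (R ((R^n) g)) := hRsym _ _
      _ = inner B f ((R^(n+1)) g) := by rw [pow_succ', ContinuousLinearMap.mul_apply]
  -- the key bound
  have hkey : ∀ f : E, ‖j (T f)‖^2 ≤ ‖T‖^2 * ‖j f‖^2 := by
    intro f
    set w : ℕ → E := fun k => (R ^ (2^k)) f with hw
    set r : ℕ → ℝ := fun k => (ψ (inner B f (w k) : B)).re with hr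
    have r0eq : r 0 = ‖j (T f)‖^2 := by
      have h1 : (inner B f (w 0) : B) = inner B (T f) (T f) := by
        have hw0 : w 0 = Tadj (T f) := by simp [hw, hRdef]
        rw [hw0, hT]
      simp only [hr, h1, hip]
      exact Complex.ofReal_re _
    have rsucc : ∀ k, r (k+1) = ‖j (w k)‖^2 := by
      intro k
      have h1 : w (k+1) = (R^(2^k)) (w k) := by
        simp only [hw]
        rw [← ContinuousLinearMap.mul_apply, ← pow_add]
        congr 1
        ring
      have h2 : (inner B f (w (k+1)) : B) = inner B (w k) (w k) := by
        rw [h1, ← hRpow]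
      simp only [hr, h2, hip]
      exact Complex.ofReal_re _
    have rCS : ∀ k, (r k)^2 ≤ ‖j f‖^2 * r (k+1) := by
      intro k
      have h1 : |r k| ≤ ‖j f‖ * ‖j (w k)‖ := by
        calc |r k| ≤ ‖(ψ (inner B f (w k) : B))‖ := Complex.abs_re_le_norm _
        _ = ‖inner ℂ (j f) (j (w k))‖ := by rw [hj]
        _ ≤ ‖j f‖ * ‖j (w k)‖ := norm_inner_le_norm _ _
      calc (r k)^2 = |r k|^2 := (sq_abs _).symm
      _ ≤ (‖j f‖ * ‖j (w k)‖)^2 := by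
          apply pow_le_pow_left₀ (abs_nonneg _) h1
      _ = ‖j f‖^2 * r (k+1) := by rw [rsucc k]; ring
    have rbound : ∀ k, r k ≤ ‖f‖^2 * (‖T‖^2)^(2^k) := by
      intro k
      calc r k ≤ ‖(ψ (inner B f (w k) : B))‖ := Complex.re_le_norm _
      _ ≤ ‖(inner B f (w k) : B)‖ := hψbound _
      _ ≤ ‖f‖ * ‖w k‖ := CStarModuleRight.norm_inner_le E
      _ ≤ ‖f‖ * (‖R^(2^k)‖ * ‖f‖) := by
          gcongr
          exact ContinuousLinearMap.le_opNorm _ _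
      _ ≤ ‖f‖ * (‖R‖^(2^k) * ‖f‖) := by
          gcongr
          exact norm_pow_le' R (Nat.pos_of_ne_zero (by positivity))
      _ ≤ ‖f‖ * ((‖T‖^2)^(2^k) * ‖f‖) := by
          gcongr
      _ = ‖f‖^2 * (‖T‖^2)^(2^k) := by ring
    have ht0 : 0 ≤ r 0 := by rw [r0eq]; positivity
    rcases eq_or_lt_of_le (norm_nonneg (j f)) with hq | hq
    · -- ‖j f‖ = 0
      have h1 := rCS 0
      rw [← hq] at h1
      simp only [ne_eq, OfNat.ofNat_ne_zero, not_false_eq_true, zero_pow, zero_mul] at h1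
      have h2 : r 0 = 0 := le_antisymm (by nlinarith) ht0
      rw [← r0eq, h2]
      positivity
    · -- ‖j f‖ > 0
      have hq2 : (0:ℝ) < ‖j f‖^2 := by positivity
      have hind : ∀ k, (r 0) ^ (2^k) * ‖j f‖^2 ≤ (‖j f‖^2)^(2^k) * r k := by
        intro k
        induction k with
        | zero => simp [mul_comm]
        | succ k ih =>
          have hA : 0 ≤ (r 0)^(2^k) := pow_nonneg ht0 _
          have hB : 0 ≤ (‖j f‖^2)^(2^k) := by positivity
          have h1 : ((r 0)^(2^k) * ‖j f‖^2)^2 ≤ ((‖j f‖^2)^(2^k) * r k)^2 :=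
            pow_le_pow_left₀ (by positivity) ih 2
          have h2 := rCS k
          have e1 : ((r 0)^(2^k))^2 = (r 0)^(2^(k+1)) := by
            rw [← pow_mul, ← pow_succ]
          have e2 : (((‖j f‖^2)^(2^k))^2 : ℝ) = (‖j f‖^2)^(2^(k+1)) := by
            rw [← pow_mul, ← pow_succ]
          have h3 : (r 0)^(2^(k+1)) * (‖j f‖^2)^2 ≤ (‖j f‖^2)^(2^(k+1)) * ((r k)^2) := by
            calc (r 0)^(2^(k+1)) * (‖j f‖^2)^2 = ((r 0)^(2^k) * ‖j f‖^2)^2 := by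
                  rw [mul_pow, e1]
            _ ≤ ((‖j f‖^2)^(2^k) * r k)^2 := h1
            _ = (‖j f‖^2)^(2^(k+1)) * ((r k)^2) := by rw [mul_pow, e2]
          have h4 : (r 0)^(2^(k+1)) * (‖j f‖^2)^2 ≤ (‖j f‖^2)^(2^(k+1)) * (‖j f‖^2 * r (k+1)) := by
            refine h3.trans ?_
            gcongr
          have := (mul_le_mul_iff_left₀ hq2).mpr (le_refl ((‖j f‖^2)^(2^(k+1)) * r (k+1)))
          calc (r 0)^(2^(k+1)) * ‖j f‖^2
              = ((r 0)^(2^(k+1)) * (‖j f‖^2)^2) / ‖j f‖^2 := by field_simp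
          _ ≤ ((‖j f‖^2)^(2^(k+1)) * (‖j f‖^2 * r (k+1))) / ‖j f‖^2 := by gcongr
          _ = (‖j f‖^2)^(2^(k+1)) * r (k+1) := by field_simp
      rw [← r0eq]
      have hf0 : 0 < ‖f‖ := lt_of_lt_of_le hq (hjle f)
      have hC : (0:ℝ) < ‖f‖^2 / ‖j f‖^2 := by positivity
      have hstep : ∀ k : ℕ, r 0 ≤ (‖T‖^2 * ‖j f‖^2) * (‖f‖^2 / ‖j f‖^2) ^ (((2:ℝ)^(k:ℕ))⁻¹) := by
        intro k
        have hn : (2:ℕ)^k ≠ 0 := by positivity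
        refine le_of_pow_le_pow_left₀ hn (by positivity) ?_
        have hCpow : ((‖f‖^2 / ‖j f‖^2) ^ (((2:ℝ)^(k:ℕ))⁻¹))^((2:ℕ)^k) = ‖f‖^2 / ‖j f‖^2 := by
          rw [← Real.rpow_natCast (((‖f‖^2 / ‖j f‖^2)) ^ (((2:ℝ)^(k:ℕ))⁻¹)) (2^k),
            ← Real.rpow_mul hC.le]
          rw [show ((((2:ℝ)^(k:ℕ))⁻¹) * ((2:ℕ)^k : ℕ)) = 1 by
            push_cast
            field_simp]
          exact Real.rpow_one _
        rw [mul_pow, hCpow]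
        have h1 : (r 0)^(2^k) * ‖j f‖^2 ≤ (‖j f‖^2)^(2^k) * (‖f‖^2 * (‖T‖^2)^(2^k)) := by
          refine (hind k).trans ?_
          gcongr
          exact rbound k
        rw [← mul_le_mul_iff_left₀ hq2]
        calc (r 0)^(2^k) * ‖j f‖^2 ≤ (‖j f‖^2)^(2^k) * (‖f‖^2 * (‖T‖^2)^(2^k)) := h1
        _ = (‖T‖ ^ 2 * ‖j f‖ ^ 2) ^ 2 ^ k * (‖f‖ ^ 2 / ‖j f‖ ^ 2) * ‖j f‖ ^ 2 := by
            rw [mul_pow]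
            field_simp
      have hlim : Filter.Tendsto
          (fun k : ℕ => (‖T‖^2 * ‖j f‖^2) * (‖f‖^2 / ‖j f‖^2) ^ (((2:ℝ)^(k:ℕ))⁻¹))
          Filter.atTop (nhds ((‖T‖^2 * ‖j f‖^2) * (‖f‖^2 / ‖j f‖^2) ^ (0:ℝ))) := by
        apply Filter.Tendsto.const_mul
        apply (Real.continuousAt_const_rpow (ne_of_gt hC)).tendsto.comp
        have : (fun k : ℕ => ((2:ℝ)^(k:ℕ))⁻¹) = fun k : ℕ => ((2:ℝ)⁻¹)^(k:ℕ) := by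
          funext k; rw [inv_pow]
        rw [this]
        exact tendsto_pow_atTop_nhds_zero_of_lt_one (by norm_num) (by norm_num)
      have hfinal := ge_of_tendsto' hlim hstep
      rw [Real.rpow_zero, mul_one] at hfinal
      exact hfinal
  -- ‖j (T g)‖ ≤ ‖T‖ * ‖j g‖
  have hjT : ∀ g : E, ‖j (T g)‖ ≤ ‖T‖ * ‖j g‖ := by
    intro g
    refine le_of_pow_le_pow_left₀ two_ne_zero (by positivity) ?_
    calc ‖j (T g)‖^2 ≤ ‖T‖^2 * ‖j g‖^2 := hkey g
    _ = (‖T‖ * ‖j g‖)^2 := by ring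
  classical
  -- construct the extension T'
  have hwd : ∀ a b : E, j a = j b → j (T a) = j (T b) := by
    intro a b hab
    have h2 : j (a - b) = 0 := by rw [map_sub, hab, sub_self]
    have h1 := hjT (a - b)
    rw [h2, norm_zero, mul_zero] at h1
    have : j (T (a - b)) = 0 := norm_le_zero_iff.mp h1
    rw [map_sub, map_sub] at this
    linear_combination (norm := module) this
  set p : Submodule ℂ Eψ := LinearMap.range j with hp
  have hmem : ∀ x : p, ∃ y : E, j y = (x : Eψ) := fun x => x.2
  choose sec hsec using hmem
  set g0 : p →ₗ[ℂ] Eψ :=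
    { toFun := fun x => j (T (sec x))
      map_add' := by
        intro x y
        show j (T (sec (x + y))) = j (T (sec x)) + j (T (sec y))
        have h1 : j (sec (x + y)) = j (sec x + sec y) := by
          rw [map_add, hsec, hsec, hsec]; rfl
        rw [hwd _ _ h1, map_add, map_add]
      map_smul' := by
        intro c x
        show j (T (sec (c • x))) = c • j (T (sec x))
        have h1 : j (sec (c • x)) = j (c • sec x) := by
          rw [map_smul, hsec, hsec]; rfl
        rw [hwd _ _ h1, map_smul, map_smul] } with hg0
  have hg0le : ∀ x : p, ‖g0 x‖ ≤ ‖T‖ * ‖x‖ := by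
    intro x
    have : ‖g0 x‖ = ‖j (T (sec x))‖ := rfl
    rw [this]
    refine (hjT (sec x)).trans ?_
    rw [hsec]
    rfl
  set g : p →L[ℂ] Eψ := g0.mkContinuous ‖T‖ hg0le with hg
  set e : p →L[ℂ] Eψ := p.subtypeL with he
  have he_iso : Isometry (⇑e) := isometry_subtype_coe
  have he_ui : IsUniformInducing (⇑e) := he_iso.isUniformInducing
  have he_range : Set.range ⇑e = Set.range ⇑j := by
    have h1 : ⇑e = (Subtype.val : p → Eψ) := rfl
    rw [h1, Subtype.range_coe, hp, LinearMap.coe_range]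
  have he_dense : DenseRange ⇑e := by
    rw [DenseRange, he_range]
    exact hdense
  set T' : Eψ →L[ℂ] Eψ := g.extend e with hT'
  have hext : ∀ f : E, T' (j f) = j (T f) := by
    intro f
    have hx : j f ∈ p := ⟨f, rfl⟩
    have h1 : j f = e (⟨j f, hx⟩ : p) := rfl
    rw [h1, hT', ContinuousLinearMap.extend_eq _ he_dense he_ui]
    show j (T (sec ⟨j f, hx⟩)) = j (T f)
    exact hwd _ _ (by rw [hsec])
  -- upper bound for the norm
  have hT'le : ‖T'‖ ≤ ‖T‖ := by
    refine ContinuousLinearMap.opNorm_le_bound _ (norm_nonneg T) fun x => ?_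
    have hcl : IsClosed {x : Eψ | ‖T' x‖ ≤ ‖T‖ * ‖x‖} :=
      isClosed_le (T'.continuous.norm) (continuous_const.mul continuous_norm)
    refine hdense.induction_on x hcl fun f => ?_
    simp only [Set.mem_setOf_eq, hext f]
    exact hjT f
  -- T is B-linear
  have hTg : ∀ (u z : E), (inner B u (T z) : B) = inner B (Tadj u) z := by
    intro u z
    calc (inner B u (T z) : B) = star (inner B (T z) u) := (CStarModuleRight.star_inner _ _).symm
    _ = star (inner B z (Tadj u)) := by rw [hT]
    _ = inner B (Tadj u) z := CStarModuleRight.star_inner _ _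
  have hmod : ∀ (u : E) (b : B), T (MulOpposite.op b • u) = MulOpposite.op b • (T u) := by
    intro u b
    have hin : ∀ v : E, (inner B v (T (MulOpposite.op b • u)) : B)
        = inner B v (MulOpposite.op b • (T u)) := by
      intro v
      calc (inner B v (T (MulOpposite.op b • u)) : B)
          = inner B (Tadj v) (MulOpposite.op b • u) := hTg _ _
      _ = inner B (Tadj v) u * b := CStarModuleRight.inner_op_smul_right
      _ = inner B v (T u) * b := by rw [hTg]
      _ = inner B v (MulOpposite.op b • (T u)) := CStarModuleRight.inner_op_smul_right.symm
    have h0 : (inner B (T (MulOpposite.op b • u) - MulOpposite.op b • (T u))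
        (T (MulOpposite.op b • u) - MulOpposite.op b • (T u)) : B) = 0 := by
      rw [CStarModuleRight.inner_sub_right, hin, sub_self]
    exact sub_eq_zero.mp (CStarModuleRight.inner_self.mp h0)
  -- lower bound for the norm
  have hT'ge : ‖T‖ ≤ ‖T'‖ := by
    refine ContinuousLinearMap.opNorm_le_bound _ (norm_nonneg T') fun f => ?_
    set c : ℝ := ‖T'‖^2 with hc
    have hcnn : (0:ℝ) ≤ c := by positivity
    have hz : (0:B) ≤ ((c:ℂ)) • (inner B f f : B) - inner B (T f) (T f) := by
      apply aux_nonneg_of_psi ψ hψpos hψfaithful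
      · apply IsSelfAdjoint.sub
        · rw [IsSelfAdjoint, star_smul, Complex.star_def, Complex.conj_ofReal,
            CStarModuleRight.star_inner]
        · rw [IsSelfAdjoint, CStarModuleRight.star_inner]
      · intro b
        set v : E := MulOpposite.op b • f with hv
        have hc2 : star b * (inner B f f : B) * b = inner B v v := by
          rw [hv]
          rw [CStarModuleRight.inner_op_smul_left, CStarModuleRight.inner_op_smul_right, mul_assoc]
        have hc3 : star b * (inner B (T f) (T f) : B) * b = inner B (T v) (T v) := by
          rw [hv, hmod]
          rw [CStarModuleRight.inner_op_smul_left, CStarModuleRight.inner_op_smul_right, mul_assoc]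
        have hc1 : star b * (((c:ℂ)) • (inner B f f : B) - inner B (T f) (T f)) * b
            = ((c:ℂ)) • (star b * (inner B f f : B) * b) - star b * (inner B (T f) (T f) : B) * b := by
          rw [mul_sub, sub_mul, mul_smul_comm, smul_mul_assoc]
        rw [hc1, hc2, hc3, map_sub, map_smul, hip, hip, smul_eq_mul]
        rw [← Complex.ofReal_mul, ← Complex.ofReal_sub]
        rw [Complex.zero_le_real]
        have h1 : ‖j (T v)‖ ≤ ‖T'‖ * ‖j v‖ := by
          rw [← hext]
          exact T'.le_opNorm _
        nlinarith [norm_nonneg (j (T v)), norm_nonneg (j v), norm_nonneg T']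
    have hle : (inner B (T f) (T f) : B) ≤ ((c:ℂ)) • (inner B f f : B) := by
      rwa [← sub_nonneg]
    have hnrm := CStarAlgebra.norm_le_norm_of_nonneg_of_le
      (CStarModuleRight.inner_self_nonneg (x := T f)) hle
    have h2 : ‖((c:ℂ)) • (inner B f f : B)‖ = c * ‖(inner B f f : B)‖ := by
      rw [norm_smul]
      congr 1
      simp [hcnn, abs_of_nonneg]
    refine le_of_pow_le_pow_left₀ two_ne_zero (by positivity) ?_
    calc ‖T f‖^2 = ‖(inner B (T f) (T f) : B)‖ := CStarModuleRight.norm_sq_eq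
    _ ≤ ‖((c:ℂ)) • (inner B f f : B)‖ := hnrm
    _ = c * ‖(inner B f f : B)‖ := h2
    _ = c * ‖f‖^2 := by rw [← CStarModuleRight.norm_sq_eq]
    _ = (‖T'‖ * ‖f‖)^2 := by rw [hc]; ring
  exact ⟨T', hext, le_antisymm hT'le hT'ge⟩
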